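/- arXiv:2303.05542 — 3 statements merged into one kernel-verified Lean document; each statement's English description precedes it below -/
import Mathlib

section
/- For integers k ≥ 3 and n ≥ 2, the maximum over 0 < x < k/n of |x·(1/n − x)·(2/n − x)·…·(k/n − x)| is at most k!/(6·n^(k+1)). -/
open Finset

lemma prod_add_cast (r c : ℕ) :
    ∏ i ∈ Finset.range r, ((i:ℝ) + c + 1) = (Nat.factorial (r + c) : ℝ) / (Nat.factorial c) := by
  induction r with
  | zero => simp [div_self (by positivity : (Nat.factorial c : ℝ) ≠ 0)]
  | succ r ih =>
    rw [Finset.prod_range_succ, ih]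
    have h : (Nat.factorial (r + 1 + c) : ℝ) = (Nat.factorial (r + c)) * ((r:ℝ) + c + 1) := by
      have e : r + 1 + c = (r + c) + 1 := by omega
      rw [e, Nat.factorial_succ]; push_cast; ring
    rw [h]
    have : (Nat.factorial c : ℝ) ≠ 0 := by positivity
    field_simp

lemma fact_mul_fact (c b : ℕ) (hb : 2 ≤ b) :
    Nat.factorial (c+2) * Nat.factorial b ≤ 2 * Nat.factorial (c + b) := by
  induction b, hb using Nat.le_induction with
  | base =>
    simp [Nat.factorial]
    ring_nf
    omega
  | succ b hb ih =>
    have : Nat.factorial (c+2) * Nat.factorial (b+1)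
        = (Nat.factorial (c+2) * Nat.factorial b) * (b+1) := by
      rw [Nat.factorial_succ b]; ring
    rw [this]
    calc (Nat.factorial (c+2) * Nat.factorial b) * (b+1)
        ≤ (2 * Nat.factorial (c+b)) * (b+1) := Nat.mul_le_mul_right _ ih
      _ ≤ (2 * Nat.factorial (c+b)) * (c+b+1) := by
          apply Nat.mul_le_mul_left; omega
      _ = 2 * Nat.factorial (c+b+1) := by rw [Nat.factorial_succ (c+b)]; ring

lemma prod_shift_le (r a : ℕ) (u : ℝ) (hu0 : 0 ≤ u) (hu1 : u ≤ 1) :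
    ∏ i ∈ Finset.range r, (((a + i : ℕ):ℝ) + u)
      ≤ (Nat.factorial (r + a) : ℝ) / Nat.factorial a := by
  calc ∏ i ∈ Finset.range r, (((a + i : ℕ):ℝ) + u)
      ≤ ∏ i ∈ Finset.range r, ((i:ℝ) + a + 1) := by
        apply Finset.prod_le_prod
        · intro i _; exact add_nonneg (Nat.cast_nonneg _) hu0
        · intro i _; push_cast; linarith
    _ = _ := prod_add_cast r a

lemma key (K m : ℕ) (hK : 3 ≤ K) (hm : m + 1 ≤ K) (t : ℝ) (ht0 : 0 ≤ t) (ht1 : t ≤ 1) :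
    ∏ j ∈ Finset.range (K+1), |(j:ℝ) - m - t| ≤ (Nat.factorial K : ℝ) / 6 := by
  have hsplit : K + 1 = (m+1) + (K - m) := by omega
  rw [hsplit, Finset.prod_range_add]
  have h1 : ∏ j ∈ Finset.range (m+1), |(j:ℝ) - m - t|
      = ∏ i ∈ Finset.range (m+1), ((i:ℝ) + t) := by
    rw [← Finset.prod_range_reflect (fun i => ((i:ℝ) + t)) (m+1)]
    apply Finset.prod_congr rfl
    intro j hj
    simp only [Finset.mem_range] at hj
    have hjm : j ≤ m := by omega
    have hc : ((m + 1 - 1 - j : ℕ) : ℝ) = (m:ℝ) - j := by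
      have : m + 1 - 1 - j = m - j := by omega
      rw [this]; push_cast [hjm]; ring
    rw [abs_of_nonpos (by
      have : (j:ℝ) ≤ m := by exact_mod_cast hjm
      linarith), hc]
    ring
  have h2 : ∏ i ∈ Finset.range (K-m), |((m+1+i : ℕ):ℝ) - m - t|
      = ∏ i ∈ Finset.range (K-m), ((i:ℝ) + 1 - t) := by
    apply Finset.prod_congr rfl
    intro i _
    have : ((m+1+i : ℕ):ℝ) - m - t = (i:ℝ) + 1 - t := by push_cast; ring
    rw [this, abs_of_nonneg (by
      have : (0:ℝ) ≤ i := Nat.cast_nonneg i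
      linarith)]
  rw [h1, h2]
  by_cases hm0 : m = 0
  · subst hm0
    simp only [zero_add, Finset.prod_range_one, Nat.cast_zero, Nat.sub_zero]
    obtain ⟨r, rfl⟩ : ∃ r, K = 3 + r := ⟨K - 3, by omega⟩
    rw [Finset.prod_range_add (fun i => (i:ℝ)+1-t) 3 r]
    have hp3 : ∏ i ∈ Finset.range 3, ((i:ℝ)+1-t) = (1-t)*(2-t)*(3-t) := by
      norm_num [Finset.prod_range_succ]
      try ring
    rw [hp3]
    have hhead : t * ((1-t)*(2-t)*(3-t)) ≤ 1 := by
      nlinarith [sq_nonneg (t^2 - 3*t + 1)]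
    have htail : ∏ i ∈ Finset.range r, (((3+i:ℕ):ℝ)+1-t)
        ≤ (Nat.factorial (r+3) : ℝ) / 6 := by
      have := prod_shift_le r 3 (1-t) (by linarith) (by linarith)
      rw [show (Nat.factorial 3 : ℝ) = 6 by norm_num [Nat.factorial]] at this
      calc ∏ i ∈ Finset.range r, (((3+i:ℕ):ℝ)+1-t)
          = ∏ i ∈ Finset.range r, (((3+i:ℕ):ℝ)+(1-t)) := by
            apply Finset.prod_congr rfl; intro i _; ring
        _ ≤ _ := this
    have htn : (0:ℝ) ≤ ∏ i ∈ Finset.range r, (((3+i:ℕ):ℝ)+1-t) := by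
      apply Finset.prod_nonneg; intro i _
      have : (0:ℝ) ≤ ((3+i:ℕ):ℝ) := Nat.cast_nonneg _
      linarith
    calc t * ((1-t)*(2-t)*(3-t) * ∏ i ∈ Finset.range r, (((3+i:ℕ):ℝ)+1-t))
        = (t * ((1-t)*(2-t)*(3-t))) * ∏ i ∈ Finset.range r, (((3+i:ℕ):ℝ)+1-t) := by ring
      _ ≤ 1 * ((Nat.factorial (r+3) : ℝ) / 6) := mul_le_mul hhead htail htn zero_le_one
      _ = (Nat.factorial (3+r) : ℝ) / 6 := by rw [one_mul, add_comm r 3]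
  · by_cases hmK : m + 1 = K
    · obtain ⟨r, rfl⟩ : ∃ r, m = 2 + r := ⟨m - 2, by omega⟩
      have hKe : K = 3 + r := by omega
      subst hKe
      rw [show 3 + r - (2 + r) = 1 from by omega]
      simp only [zero_add, Finset.prod_range_one, Nat.cast_zero]
      rw [show (2 + r) + 1 = 3 + r from by omega,
        Finset.prod_range_add (fun i => (i:ℝ)+t) 3 r]
      have hp3 : ∏ i ∈ Finset.range 3, ((i:ℝ)+t) = t*(1+t)*(2+t) := by
        norm_num [Finset.prod_range_succ]
      try ring1
      rw [hp3]
      have hhead : (t*(1+t)*(2+t)) * (1-t) ≤ 1 := by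
        nlinarith [sq_nonneg (t^2 + t - 1)]
      have htail : ∏ i ∈ Finset.range r, (((3+i:ℕ):ℝ)+t)
          ≤ (Nat.factorial (r+3) : ℝ) / 6 := by
        have := prod_shift_le r 3 t ht0 ht1
        rw [show (Nat.factorial 3 : ℝ) = 6 by norm_num [Nat.factorial]] at this
        exact this
      have htn : (0:ℝ) ≤ ∏ i ∈ Finset.range r, (((3+i:ℕ):ℝ)+t) := by
        apply Finset.prod_nonneg; intro i _
        have : (0:ℝ) ≤ ((3+i:ℕ):ℝ) := Nat.cast_nonneg _
        linarith
      calc (t*(1+t)*(2+t) * ∏ i ∈ Finset.range r, (((3+i:ℕ):ℝ)+t)) * (1-t)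
          = ((t*(1+t)*(2+t)) * (1-t)) * ∏ i ∈ Finset.range r, (((3+i:ℕ):ℝ)+t) := by
            ring
        _ ≤ 1 * ((Nat.factorial (r+3) : ℝ) / 6) := mul_le_mul hhead htail htn zero_le_one
        _ = (Nat.factorial (3+r) : ℝ) / 6 := by rw [one_mul, add_comm r 3]
    · have hm1 : 1 ≤ m := Nat.one_le_iff_ne_zero.2 hm0
      have hb2 : 2 ≤ K - m := by omega
      rw [show m + 1 = 1 + m from by omega,
        Finset.prod_range_add (fun i => (i:ℝ)+t) 1 m,
        show K - m = 1 + (K - m - 1) from by omega,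
        Finset.prod_range_add (fun i => (i:ℝ)+1-t) 1 (K-m-1)]
      simp only [zero_add, Finset.prod_range_one, Nat.cast_zero]
      have hA : ∏ i ∈ Finset.range m, (((1+i:ℕ):ℝ)+t)
          ≤ (Nat.factorial (m+1) : ℝ) := by
        have := prod_shift_le m 1 t ht0 ht1
        simpa [Nat.factorial] using this
      have hB : ∏ i ∈ Finset.range (K-m-1), (((1+i:ℕ):ℝ)+1-t)
          ≤ (Nat.factorial (K-m) : ℝ) := by
        have h := prod_shift_le (K-m-1) 1 (1-t) (by linarith) (by linarith)
        rw [show K - m - 1 + 1 = K - m from by omega] at h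
        calc ∏ i ∈ Finset.range (K-m-1), (((1+i:ℕ):ℝ)+1-t)
            = ∏ i ∈ Finset.range (K-m-1), (((1+i:ℕ):ℝ)+(1-t)) := by
              apply Finset.prod_congr rfl; intro i _; ring
          _ ≤ _ := by simpa [Nat.factorial] using h
      have hAn : (0:ℝ) ≤ ∏ i ∈ Finset.range m, (((1+i:ℕ):ℝ)+t) := by
        apply Finset.prod_nonneg; intro i _
        have : (0:ℝ) ≤ ((1+i:ℕ):ℝ) := Nat.cast_nonneg _
        linarith
      have hBn : (0:ℝ) ≤ ∏ i ∈ Finset.range (K-m-1), (((1+i:ℕ):ℝ)+1-t) := by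
        apply Finset.prod_nonneg; intro i _
        have : (0:ℝ) ≤ ((1+i:ℕ):ℝ) := Nat.cast_nonneg _
        linarith
      have hfact : (Nat.factorial (m+1) * Nat.factorial (K-m) : ℕ)
          ≤ 2 * Nat.factorial (K-1) := by
        have := fact_mul_fact (m-1) (K-m) hb2
        rw [show m - 1 + 2 = m + 1 from by omega,
          show m - 1 + (K - m) = K - 1 from by omega] at this
        exact this
      have hfactR : (Nat.factorial (m+1) : ℝ) * Nat.factorial (K-m)
          ≤ 2 * Nat.factorial (K-1) := by exact_mod_cast hfact
      have hKfact : (Nat.factorial K : ℝ) = (K:ℝ) * Nat.factorial (K-1) := by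
        have h := Nat.factorial_succ (K-1)
        rw [show K - 1 + 1 = K from by omega] at h
        rw [h]; push_cast [show K - 1 + 1 = K from by omega]; ring
      have hK3 : (3:ℝ) ≤ (K:ℝ) := by exact_mod_cast hK
      have hFn : (0:ℝ) ≤ (Nat.factorial (K-1) : ℝ) := Nat.cast_nonneg _
      calc (t * ∏ i ∈ Finset.range m, (((1+i:ℕ):ℝ)+t)) *
            ((1-t) * ∏ i ∈ Finset.range (K-m-1), (((1+i:ℕ):ℝ)+1-t))
          = (t*(1-t)) * ((∏ i ∈ Finset.range m, (((1+i:ℕ):ℝ)+t)) *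
              ∏ i ∈ Finset.range (K-m-1), (((1+i:ℕ):ℝ)+1-t)) := by ring
        _ ≤ (1/4) * ((Nat.factorial (m+1) : ℝ) * Nat.factorial (K-m)) := by
            apply mul_le_mul (by nlinarith [sq_nonneg (t - 1/2)])
              (mul_le_mul hA hB hBn (Nat.cast_nonneg _))
              (mul_nonneg hAn hBn) (by norm_num)
        _ ≤ (1/4) * (2 * Nat.factorial (K-1)) := by
            apply mul_le_mul_of_nonneg_left hfactR (by norm_num)
        _ ≤ (Nat.factorial K : ℝ) / 6 := by
            rw [hKfact]; nlinarith

theorem stmt_1 (k n : ℤ) (hk : 3 ≤ k) (hn : 2 ≤ n) :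
    ∀ x : ℝ, 0 < x → x < (k : ℝ) / n →
      |∏ j ∈ Finset.Icc (0 : ℤ) k, ((j : ℝ) / n - x)| ≤ (Nat.factorial k.toNat : ℝ) / (6 * (n : ℝ) ^ (k.toNat + 1)) := by
  intro x hx0 hx1
  set K := k.toNat with hKdef
  have hkK : (K : ℤ) = k := Int.toNat_of_nonneg (by omega)
  have hK3 : 3 ≤ K := by omega
  have hnR : (0:ℝ) < (n:ℝ) := by exact_mod_cast (by omega : (0:ℤ) < n)
  have hkR : ((k:ℝ)) = (K:ℝ) := by rw [← hkK]; push_cast; ring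
  set y := (n:ℝ) * x with hy
  have hy0 : 0 < y := by positivity
  have hyK : y < (K:ℝ) := by
    have h := (lt_div_iff₀ hnR).mp hx1
    rw [hkR] at h; rw [hy]; linarith
  set m := (⌊y⌋).toNat with hmdef
  have hfl0 : 0 ≤ ⌊y⌋ := Int.floor_nonneg.2 hy0.le
  have hmc : ((m:ℤ)) = ⌊y⌋ := Int.toNat_of_nonneg hfl0
  have hmR : ((m:ℝ)) = ((⌊y⌋:ℤ):ℝ) := by exact_mod_cast congrArg (fun z : ℤ => (z:ℝ)) hmc
  set t := y - (m:ℝ) with htdef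
  have ht0 : 0 ≤ t := by
    have := Int.floor_le y
    rw [htdef, hmR]; linarith
  have ht1 : t ≤ 1 := by
    have := Int.lt_floor_add_one y
    rw [htdef, hmR]; linarith
  have hmK : m + 1 ≤ K := by
    have hlt : ⌊y⌋ < (K:ℤ) := Int.floor_lt.2 (by exact_mod_cast hyK)
    omega
  rw [Finset.abs_prod]
  have hcard : (Finset.Icc (0:ℤ) k).card = K + 1 := by
    rw [Int.card_Icc]; omega
  have step1 : ∀ j ∈ Finset.Icc (0:ℤ) k, |(j:ℝ)/n - x| = |(j:ℝ) - y| / n := by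
    intro j _
    have hne : (n:ℝ) ≠ 0 := ne_of_gt hnR
    have : (j:ℝ)/n - x = ((j:ℝ) - y)/n := by rw [hy]; field_simp
    rw [this, abs_div, abs_of_pos hnR]
  rw [Finset.prod_congr rfl step1, Finset.prod_div_distrib, Finset.prod_const, hcard]
  have himg : Finset.Icc (0:ℤ) k = (Finset.range (K+1)).image (fun j : ℕ => (j:ℤ)) := by
    ext j
    simp only [Finset.mem_Icc, Finset.mem_image, Finset.mem_range]
    constructor
    · rintro ⟨h1, h2⟩; exact ⟨j.toNat, by omega, by omega⟩
    · rintro ⟨a, ha, rfl⟩; omega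
  rw [himg, Finset.prod_image (by intro a _ b _ h; exact_mod_cast (show (a:ℤ) = b from h))]
  have step2 : ∀ j ∈ Finset.range (K+1), |(((j:ℕ):ℤ):ℝ) - y| = |(j:ℝ) - m - t| := by
    intro j _
    have : (((j:ℕ):ℤ):ℝ) - y = (j:ℝ) - m - t := by rw [htdef]; push_cast; ring
    rw [this]
  rw [Finset.prod_congr rfl step2]
  have hkey := key K m hK3 hmK t ht0 ht1
  have hpow : (0:ℝ) < (n:ℝ)^(K+1) := by positivity
  calc (∏ j ∈ Finset.range (K+1), |(j:ℝ) - m - t|) / (n:ℝ)^(K+1)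
      ≤ ((Nat.factorial K : ℝ) / 6) / (n:ℝ)^(K+1) := by gcongr
    _ = (Nat.factorial K : ℝ) / (6 * (n:ℝ)^(K+1)) := by ring
end

section
/- For any integer k ≥ 3 and real y ∈ (0, k), |y(1−y)(2−y)⋯(k−y)| ≤ (k!/6)·max_{0<t<1} t(1−t)(2−t)(3−t) ≤ k!/6. -/
open Finset

lemma sym_prod (n : ℕ) (y : ℝ) :
    ∏ j ∈ Finset.range (n + 1), |(j : ℝ) - y| =
      ∏ j ∈ Finset.range (n + 1), |(j : ℝ) - ((n : ℝ) - y)| := by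
  calc ∏ j ∈ Finset.range (n + 1), |(j : ℝ) - y|
      = ∏ j ∈ Finset.range (n + 1), |((n - j : ℕ) : ℝ) - y| :=
        (Finset.prod_range_reflect (fun j => |(j : ℝ) - y|) (n + 1)).symm
    _ = ∏ j ∈ Finset.range (n + 1), |(j : ℝ) - ((n : ℝ) - y)| := by
        refine Finset.prod_congr rfl fun j hj => ?_
        have hjn : j ≤ n := Nat.lt_succ_iff.mp (Finset.mem_range.mp hj)
        rw [Nat.cast_sub hjn, show ((n : ℝ) - j) - y = -((j : ℝ) - ((n : ℝ) - y)) by ring,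
          abs_neg]

lemma prod_le_fact (k : ℕ) (hk : 3 ≤ k) :
    ∀ y : ℝ, 0 < y → y < (k : ℝ) →
      (∏ j ∈ Finset.range (k + 1), |(j : ℝ) - y|) ≤ (Nat.factorial k : ℝ) / 6 := by
  induction k, hk using Nat.le_induction with
  | base =>
    intro y hy0 hy3
    have h3 : y < 3 := by exact_mod_cast hy3
    have hprod : (∏ j ∈ Finset.range 4, |(j : ℝ) - y|) = |((0:ℝ) - y) * (1 - y) * (2 - y) * (3 - y)| := by
      simp [Finset.prod_range_succ, abs_mul]
    rw [hprod]
    have : (Nat.factorial 3 : ℝ) / 6 = 1 := by norm_num [Nat.factorial]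
    rw [this, abs_le]
    have hu0 : 0 < y * (3 - y) := mul_pos hy0 (by linarith)
    have hu9 : y * (3 - y) ≤ 9 / 4 := by nlinarith [sq_nonneg (2*y - 3)]
    have hkey : (0:ℝ) ≤ (9/4 - y*(3-y)) * (y*(3-y)) :=
      mul_nonneg (by linarith) (le_of_lt hu0)
    constructor
    · nlinarith [sq_nonneg (3*y - y^2 - 1)]
    · nlinarith [sq_nonneg (3*y - y^2 - 1)]
  | succ n hn ih =>
    have helper : ∀ z : ℝ, 0 < z → z < (n : ℝ) →
        (∏ j ∈ Finset.range (n + 2), |(j : ℝ) - z|) ≤ (Nat.factorial (n + 1) : ℝ) / 6 := by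
      intro z hz0 hzn
      rw [show n + 2 = (n + 1) + 1 by ring, Finset.prod_range_succ]
      have h1 := ih z hz0 hzn
      have h2 : |((n + 1 : ℕ) : ℝ) - z| ≤ (n : ℝ) + 1 := by
        rw [abs_of_pos (by push_cast; linarith)]
        push_cast
        linarith
      have hnn : (0:ℝ) ≤ ∏ j ∈ Finset.range (n + 1 + 1), |(j : ℝ) - z| :=
        Finset.prod_nonneg fun _ _ => abs_nonneg _
      have hmul := mul_le_mul h1 h2 (abs_nonneg _)
        (by positivity : (0:ℝ) ≤ (Nat.factorial n : ℝ) / 6)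
      refine hmul.trans (le_of_eq ?_)
      rw [Nat.factorial_succ]
      push_cast
      ring
    intro y hy0 hyn1
    by_cases hc : y < (n : ℝ)
    · exact helper y hy0 hc
    · push_neg at hc
      have hsym := sym_prod (n + 1) y
      rw [show n + 1 + 1 = n + 2 by ring] at hsym
      rw [hsym]
      push_cast
      have h1 : (0:ℝ) < (n : ℝ) + 1 - y := by push_cast at hyn1; linarith
      have h2 : (n : ℝ) + 1 - y < (n : ℝ) := by
        have : (3:ℝ) ≤ (n : ℝ) := by exact_mod_cast hn
        linarith
      exact helper _ h1 h2

lemma sSup_eq_one :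
    sSup ((fun t : ℝ => t * (1 - t) * (2 - t) * (3 - t)) '' Set.Ioo 0 1) = 1 := by
  have hgr : IsGreatest ((fun t : ℝ => t * (1 - t) * (2 - t) * (3 - t)) '' Set.Ioo 0 1) 1 := by
    constructor
    · refine ⟨(3 - Real.sqrt 5) / 2, ⟨?_, ?_⟩, ?_⟩
      · have hs : Real.sqrt 5 ^ 2 = 5 := Real.sq_sqrt (by norm_num)
        have hs0 : 0 ≤ Real.sqrt 5 := Real.sqrt_nonneg _
        nlinarith
      · have hs : Real.sqrt 5 ^ 2 = 5 := Real.sq_sqrt (by norm_num)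
        have hs0 : 0 ≤ Real.sqrt 5 := Real.sqrt_nonneg _
        nlinarith
      · have hs : Real.sqrt 5 ^ 2 = 5 := Real.sq_sqrt (by norm_num)
        linear_combination (-(Real.sqrt 5 ^ 2 - 5) / 16 + 0) * hs
    · rintro x ⟨t, _, rfl⟩
      show t * (1 - t) * (2 - t) * (3 - t) ≤ 1
      nlinarith [sq_nonneg (3*t - t^2 - 1)]
  exact hgr.csSup_eq

theorem stmt_5 (k : ℕ) (hk : 3 ≤ k) (y : ℝ) (hy : y ∈ Set.Ioo (0 : ℝ) k) :
    (∏ j ∈ Finset.range (k + 1), |(j : ℝ) - y|) ≤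
      ((Nat.factorial k : ℝ) / 6) * sSup ((fun t : ℝ => t * (1 - t) * (2 - t) * (3 - t)) '' Set.Ioo 0 1) ∧
    ((Nat.factorial k : ℝ) / 6) * sSup ((fun t : ℝ => t * (1 - t) * (2 - t) * (3 - t)) '' Set.Ioo 0 1) ≤
      (Nat.factorial k : ℝ) / 6 := by
  rw [sSup_eq_one, mul_one]
  exact ⟨prod_le_fact k hk y hy.1 hy.2, le_refl _⟩
end

section
/- For any integer t ≥ 1 and real c > 1, ∫_{ct}^∞ e^{-x} x^{t-1} dx ≤ (c/(c−1)) · e^{-ct} · (ct)^{t-1}. -/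
open Set Real MeasureTheory Filter

lemma integral_exp_neg_mul_Ioi_aux (a : ℝ) {b : ℝ} (hb : 0 < b) :
    ∫ x in Set.Ioi a, Real.exp (-(b * x)) = Real.exp (-(b * a)) / b := by
  have hderiv : ∀ x ∈ Set.Ici a,
      HasDerivAt (fun x => -Real.exp (-(b * x)) / b) (Real.exp (-(b * x))) x := by
    intro x _
    have h1 : HasDerivAt (fun x : ℝ => -(b * x)) (-b) x := by
      simpa [Pi.neg_def] using ((hasDerivAt_id x).const_mul b).neg
    have h2 := (Real.hasDerivAt_exp (-(b * x))).comp x h1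
    have h3 := (h2.neg).div_const b
    refine h3.congr_deriv ?_
    field_simp
  have hint : IntegrableOn (fun x => Real.exp (-(b * x))) (Set.Ioi a) := by
    simpa [neg_mul] using exp_neg_integrableOn_Ioi a hb
  have htend : Tendsto (fun x => -Real.exp (-(b * x)) / b) atTop (nhds 0) := by
    have : Tendsto (fun x : ℝ => -(b * x)) atTop atBot := by
      exact tendsto_neg_atTop_atBot.comp ((tendsto_const_mul_atTop_of_pos hb).mpr tendsto_id)
    have h := (Real.tendsto_exp_atBot.comp this)
    have := (h.neg).div_const b
    simpa using this
  have := integral_Ioi_of_hasDerivAt_of_tendsto' hderiv hint htend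
  rw [this]
  ring

theorem stmt_15 (t : ℕ) (ht : 1 ≤ t) (c : ℝ) (hc : 1 < c) :
    ∫ x in Set.Ioi (c * t), Real.exp (-x) * x ^ (t - 1) ≤
      c / (c - 1) * Real.exp (-(c * t)) * (c * t) ^ (t - 1) := by
  have hc0 : (0:ℝ) < c := lt_trans one_pos hc
  have ht0 : (0:ℝ) < t := by exact_mod_cast ht
  set a : ℝ := c * t with ha_def
  have ha : 0 < a := mul_pos hc0 ht0
  set b : ℝ := (c - 1) / c with hb_def
  have hb : 0 < b := div_pos (by linarith) hc0
  set g : ℝ → ℝ := fun x => a ^ (t - 1) * Real.exp (-(t:ℝ)) * Real.exp (-(b * x)) with hg_def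
  have hbound : ∀ x ∈ Set.Ioi a, Real.exp (-x) * x ^ (t - 1) ≤ g x := by
    intro x hx
    have hxa : a < x := hx
    have hx0 : 0 < x := lt_trans ha hxa
    have h1 : x ≤ a * Real.exp (x / a - 1) := by
      have := Real.add_one_le_exp (x / a - 1)
      have h2 : x / a ≤ Real.exp (x / a - 1) := by linarith
      calc x = a * (x / a) := by field_simp
        _ ≤ a * Real.exp (x / a - 1) := by
            exact mul_le_mul_of_nonneg_left h2 ha.le
    have h2 : x ^ (t - 1) ≤ a ^ (t - 1) * Real.exp ((t - 1 : ℕ) * (x / a - 1)) := by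
      calc x ^ (t - 1) ≤ (a * Real.exp (x / a - 1)) ^ (t - 1) :=
            pow_le_pow_left₀ hx0.le h1 _
        _ = a ^ (t - 1) * Real.exp ((t - 1 : ℕ) * (x / a - 1)) := by
            rw [mul_pow, ← Real.exp_nat_mul]
    have h3 : ((t - 1 : ℕ) : ℝ) * (x / a - 1) ≤ x / c - t := by
      have hxa1 : 0 ≤ x / a - 1 := by
        rw [sub_nonneg, le_div_iff₀ ha]
        linarith
      have htt : ((t - 1 : ℕ) : ℝ) ≤ (t : ℝ) := by
        have : (t - 1 : ℕ) ≤ t := Nat.sub_le t 1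
        exact_mod_cast this
      have h4 : ((t - 1 : ℕ) : ℝ) * (x / a - 1) ≤ (t : ℝ) * (x / a - 1) :=
        mul_le_mul_of_nonneg_right htt hxa1
      have h5 : (t : ℝ) * (x / a - 1) = x / c - t := by
        rw [ha_def]; field_simp
      linarith
    have h6 : x ^ (t - 1) ≤ a ^ (t - 1) * Real.exp (x / c - t) :=
      h2.trans (mul_le_mul_of_nonneg_left (Real.exp_le_exp.mpr h3) (pow_nonneg ha.le _))
    calc Real.exp (-x) * x ^ (t - 1)
        ≤ Real.exp (-x) * (a ^ (t - 1) * Real.exp (x / c - t)) :=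
          mul_le_mul_of_nonneg_left h6 (Real.exp_pos _).le
      _ = g x := by
          rw [hg_def]
          have hadd : -x + (x / c - t) = -(t:ℝ) + -(b * x) := by
            rw [hb_def]; field_simp; ring
          calc Real.exp (-x) * (a ^ (t - 1) * Real.exp (x / c - t))
              = a ^ (t - 1) * Real.exp (-x + (x / c - t)) := by
                rw [Real.exp_add]; ring
            _ = a ^ (t - 1) * Real.exp (-(t:ℝ)) * Real.exp (-(b * x)) := by
                rw [hadd, Real.exp_add]; ring
  have hgint : IntegrableOn g (Set.Ioi a) := by
    have := (exp_neg_integrableOn_Ioi a hb)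
    have h := this.const_mul (a ^ (t - 1) * Real.exp (-(t:ℝ)))
    simpa [hg_def, neg_mul, IntegrableOn] using h
  have hfint : IntegrableOn (fun x => Real.exp (-x) * x ^ (t - 1)) (Set.Ioi a) := by
    refine Integrable.mono' hgint ?_ ?_
    · exact (Continuous.aestronglyMeasurable (by continuity)).restrict
    · filter_upwards [ae_restrict_mem measurableSet_Ioi] with x hx
      rw [Real.norm_eq_abs, abs_of_nonneg (mul_nonneg (Real.exp_pos _).le
        (pow_nonneg (le_of_lt (lt_trans ha hx)) _))]
      exact hbound x hx
  have hmono := setIntegral_mono_on hfint hgint measurableSet_Ioi hbound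
  have hgval : ∫ x in Set.Ioi a, g x
      = a ^ (t - 1) * Real.exp (-(t:ℝ)) * (Real.exp (-(b * a)) / b) := by
    rw [hg_def]
    rw [MeasureTheory.integral_const_mul]
    rw [integral_exp_neg_mul_Ioi_aux a hb]
  have hba : b * a = (c - 1) * t := by rw [hb_def, ha_def]; field_simp
  have hexp : Real.exp (-(t:ℝ)) * Real.exp (-(b * a)) = Real.exp (-a) := by
    rw [← Real.exp_add, hba, ha_def]; congr 1; ring
  have hbinv : 1 / b = c / (c - 1) := by rw [hb_def]; field_simp
  have key : a ^ (t - 1) * Real.exp (-(t:ℝ)) * (Real.exp (-(b * a)) / b)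
      = c / (c - 1) * Real.exp (-a) * a ^ (t - 1) := by
    rw [← hbinv, ← hexp]; ring
  exact hmono.trans (le_of_eq (hgval.trans key))
end
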